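/- The number of 2-Dyck paths of length 2n equals the n-th little Schröder number, where a 2-Dyck path is a Dyck path in which each up step not immediately followed by a down step is colored with one of 2 colors. -/

import Mathlib

/-- Height change of a Dyck step (`true` = up, `false` = down). -/
def dval (b : Bool) : ℤ := if b then 1 else -1

/-- The final height of a Dyck-step word. -/
def dsum (l : List Bool) : ℤ := (l.map dval).sum

/-- A Dyck path: every prefix has nonnegative height, and the final height is `0`. -/
def IsDyck (l : List Bool) : Prop :=
  (∀ pre, pre <+: l → 0 ≤ dsum pre) ∧ dsum l = 0

/-- Position `r` of `l` is a "free" up step: an up step immediately followed by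
another up step (i.e. not immediately followed by a down step; in a Dyck path
an up step is never the last step). -/
def FreeUp (l : List Bool) (r : ℕ) : Prop := l[r]? = some true ∧ l[r + 1]? = some true

/-- The number of `k`-Dyck paths of length `2i`: Dyck paths in which every up step not
immediately followed by a down step is given one of `k` colors (encoded by a coloring
function that is `< k` on free up steps and `0` elsewhere). -/
noncomputable def colouredDyck (k i : ℕ) : ℕ :=
  Nat.card {x : List Bool × (ℕ → ℕ) //
    IsDyck x.1 ∧ x.1.length = 2 * i ∧
      ∀ r, (FreeUp x.1 r → x.2 r < k) ∧ (¬ FreeUp x.1 r → x.2 r = 0)}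

/-- A Schröder step: up `(1,1)`, down `(1,-1)`, or horizontal `(2,0)`. -/
inductive SStep | U | D | H
deriving DecidableEq

/-- The x-length of a Schröder step. -/
def SStep.x : SStep → ℕ
  | SStep.U => 1
  | SStep.D => 1
  | SStep.H => 2

/-- The height change of a Schröder step. -/
def SStep.y : SStep → ℤ
  | SStep.U => 1
  | SStep.D => -1
  | SStep.H => 0

/-- The total x-length of a Schröder-step word. -/
def sxlen (l : List SStep) : ℕ := (l.map SStep.x).sum

/-- The final height of a Schröder-step word. -/
def sysum (l : List SStep) : ℤ := (l.map SStep.y).sum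

/-- A Schröder path of length `2n` with no peak at level one: nonnegative prefix
heights, final height `0`, total x-length `2n`, and no `UD` factor whose peak is
at height `1`. -/
def IsLittleSchroederPath (n : ℕ) (l : List SStep) : Prop :=
  sxlen l = 2 * n ∧ (∀ pre, pre <+: l → 0 ≤ sysum pre) ∧ sysum l = 0 ∧
    ¬ ∃ p q, l = p ++ SStep.U :: SStep.D :: q ∧ sysum p = 0

/-- The `n`-th little Schröder number: the number of Schröder paths of length `2n`
with no peaks at level one. -/
noncomputable def littleSchroeder (n : ℕ) : ℕ := Nat.card {l : List SStep // IsLittleSchroederPath n l}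

namespace Aux17

variable {α : Type*}

def wsum (w : α → ℤ) (l : List α) : ℤ := (l.map w).sum

@[simp] lemma wsum_nil (w : α → ℤ) : wsum w [] = 0 := rfl
@[simp] lemma wsum_cons (w : α → ℤ) (a : α) (l : List α) :
    wsum w (a :: l) = w a + wsum w l := by simp [wsum]
@[simp] lemma wsum_append (w : α → ℤ) (l₁ l₂ : List α) :
    wsum w (l₁ ++ l₂) = wsum w l₁ + wsum w l₂ := by simp [wsum]

def spl (w : α → ℤ) : ℤ → List α → List α × List α
  | _, [] => ([], [])
  | s, a :: t =>
    if s + w a < 0 then ([], t)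
    else ((spl w (s + w a) t).1.cons a, (spl w (s + w a) t).2)

lemma spl_append (w : α → ℤ) (d : α) :
    ∀ (m : List α) (s : ℤ) (r : List α),
      (∀ p, p <+: m → 0 ≤ s + wsum w p) → s + wsum w m + w d < 0 →
      spl w s (m ++ d :: r) = (m, r) := by
  intro m
  induction m with
  | nil =>
    intro s r _ hd
    simp only [wsum_nil, add_zero] at hd
    simp [spl, hd]
  | cons a m ih =>
    intro s r hm hd
    have h1 : 0 ≤ s + w a := by simpa using hm [a] ⟨m, rfl⟩
    have h2 : ¬ s + w a < 0 := not_lt.2 h1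
    simp only [List.cons_append, spl, h2, if_false]
    have := ih (s + w a) r (fun p hp => by
      have := hm (a :: p) (by simpa [List.cons_prefix_cons] using hp)
      simpa [add_assoc] using this)
      (by simpa [add_assoc] using hd)
    simp [this]

lemma spl_spec (w : α → ℤ) (d₀ : α) (hneg : ∀ a, w a < 0 → a = d₀ ∧ w a = -1) :
    ∀ (t : List α) (s : ℤ), 0 ≤ s → s + wsum w t < 0 →
      t = (spl w s t).1 ++ d₀ :: (spl w s t).2 ∧
      (∀ p, p <+: (spl w s t).1 → 0 ≤ s + wsum w p) ∧ s + wsum w (spl w s t).1 = 0 := by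
  intro t
  induction t with
  | nil => intro s hs h; simp at h; omega
  | cons a t ih =>
    intro s hs h
    by_cases hc : s + w a < 0
    · have hwa : w a < 0 := by omega
      obtain ⟨had, hwa1⟩ := hneg a hwa
      have hs0 : s = 0 := by omega
      subst had
      refine ⟨?_, ?_, ?_⟩
      · simp [spl, hc]
      · intro p hp
        simp only [spl, hc, if_true, reduceIte] at hp
        simp [List.prefix_nil.1 hp, hs]
      · simp [spl, hs0, hwa]
    · have h1 : 0 ≤ s + w a := not_lt.1 hc
      obtain ⟨e1, e2, e3⟩ := ih (s + w a) h1 (by simpa [add_assoc] using h)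
      refine ⟨?_, ?_, ?_⟩
      · simp only [spl, hc, if_false]
        simpa using congrArg (a :: ·) e1
      · intro p hp
        simp only [spl, hc, if_false] at hp
        rcases hp with ⟨q, hq⟩
        match p, hq with
        | [], _ => simpa using hs
        | b :: p', hq =>
          have hb : b = a ∧ p' <+: (spl w (s + w a) t).1 := by
            rw [List.cons_append, List.cons.injEq] at hq
            exact ⟨hq.1, ⟨q, hq.2⟩⟩
          obtain ⟨rfl, hp'⟩ := hb
          have := e2 p' hp'
          simp only [wsum_cons]
          omega
      · simp only [spl, hc, if_false, List.cons.injEq, wsum_cons]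
        omega

end Aux17

open Aux17

instance : Fintype SStep := ⟨{.U, .D, .H}, fun x => by cases x <;> simp⟩

/-- large Schröder path predicate -/
def Sch (n : ℕ) (l : List SStep) : Prop :=
  sxlen l = 2 * n ∧ (∀ pre, pre <+: l → 0 ≤ sysum pre) ∧ sysum l = 0

lemma sysum_eq (l : List SStep) : sysum l = wsum SStep.y l := rfl

@[simp] lemma sxlen_nil : sxlen ([] : List SStep) = 0 := rfl
@[simp] lemma sxlen_cons (a : SStep) (l : List SStep) : sxlen (a :: l) = a.x + sxlen l := by
  simp [sxlen]
@[simp] lemma sxlen_append (l₁ l₂ : List SStep) : sxlen (l₁ ++ l₂) = sxlen l₁ + sxlen l₂ := by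
  simp [sxlen]

lemma length_le_sxlen (l : List SStep) : l.length ≤ sxlen l := by
  induction l with
  | nil => simp
  | cons a t ih => have : 1 ≤ a.x := by cases a <;> simp [SStep.x]
                   simp only [List.length_cons, sxlen_cons]; omega

lemma sxlen_parity (l : List SStep) : (2 : ℤ) ∣ (sxlen l : ℤ) - sysum l := by
  induction l with
  | nil => simp [sysum]
  | cons a t ih =>
    have : (2:ℤ) ∣ (a.x : ℤ) - a.y := by cases a <;> simp [SStep.x, SStep.y]
    simp only [sxlen_cons, sysum_eq, wsum_cons, Nat.cast_add] at *
    omega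

lemma sch_finite (n : ℕ) : Finite {l : List SStep // Sch n l} := by
  have h : {l : List SStep | Sch n l} ⊆ {l : List SStep | l.length ≤ 2 * n} := by
    intro l hl
    have := length_le_sxlen l
    have := hl.1
    simp only [Set.mem_setOf_eq]
    omega
  exact ((List.finite_length_le SStep (2*n)).subset h).to_subtype

noncomputable def R (n : ℕ) : ℕ := Nat.card {l : List SStep // Sch n l}

lemma sxlen_pos_ne_nil {l : List SStep} (h : 0 < sxlen l) : l ≠ [] := by
  rintro rfl; simp at h

lemma R_zero : R 0 = 1 := by
  have : ∀ l : List SStep, Sch 0 l → l = [] := by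
    intro l hl
    have h1 := length_le_sxlen l
    have h2 := hl.1
    exact List.eq_nil_of_length_eq_zero (by omega)
  have : Unique {l : List SStep // Sch 0 l} :=
    ⟨⟨⟨[], by refine ⟨rfl, ?_, rfl⟩; intro p hp; simp [List.prefix_nil.1 hp, sysum]⟩⟩,
     fun l => Subtype.ext (by rw [this _ l.2]; rfl)⟩
  simp [R, Nat.card_unique]

section prefixlemmas
variable {α : Type*}

lemma prefix_cons_cases {a : α} {t p : List α} (h : p <+: a :: t) :
    p = [] ∨ ∃ q, p = a :: q ∧ q <+: t := by
  cases p with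
  | nil => exact Or.inl rfl
  | cons b q =>
    rw [List.cons_prefix_cons] at h
    exact Or.inr ⟨q, by rw [h.1], h.2⟩

lemma prefix_append_cases {q m r : List α} {d : α} (h : q <+: m ++ d :: r) :
    q <+: m ∨ ∃ q', q = m ++ d :: q' ∧ q' <+: r := by
  by_cases hle : q.length ≤ m.length
  · exact Or.inl (List.prefix_of_prefix_length_le h (m.prefix_append _) hle)
  · right
    have h2 : m ++ [d] <+: q := by
      refine List.prefix_of_prefix_length_le ?_ h ?_
      · simpa using (m.prefix_append (d :: r))
      · simp; omega
    obtain ⟨q', rfl⟩ := h2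
    refine ⟨q', by simp, ?_⟩
    obtain ⟨u, hu⟩ := h
    simp only [List.append_assoc, List.singleton_append, List.append_cancel_left_eq] at hu
    rw [List.cons_append, List.cons.injEq] at hu
    exact ⟨u, hu.2⟩

end prefixlemmas

lemma Sch_cons_H {n : ℕ} {t : List SStep} (h : Sch n t) : Sch (n + 1) (SStep.H :: t) := by
  refine ⟨by simp [h.1, SStep.x]; ring, ?_, by
    have := h.2.2; simp only [sysum_eq, wsum_cons] at *; simp [SStep.y]; omega⟩
  intro p hp
  rcases prefix_cons_cases hp with rfl | ⟨q, rfl, hq⟩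
  · simp [sysum]
  · simpa [sysum_eq, SStep.y] using h.2.1 q hq

lemma Sch_U_D {i j : ℕ} {m r : List SStep} (hm : Sch i m) (hr : Sch j r) :
    Sch (i + j + 1) (SStep.U :: m ++ SStep.D :: r) := by
  have hsm := hm.2.2
  have hsr := hr.2.2
  refine ⟨?_, ?_, ?_⟩
  · simp [hm.1, hr.1, SStep.x]; ring
  · intro p hp
    rcases prefix_cons_cases hp with rfl | ⟨q, rfl, hq⟩
    · simp [sysum]
    · rcases prefix_append_cases hq with hq' | ⟨q', rfl, hq'⟩
      · have := hm.2.1 q hq'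
        simp only [sysum_eq, wsum_cons] at *
        simp [SStep.y]; omega
      · have := hr.2.1 q' hq'
        simp only [sysum_eq, wsum_cons, wsum_append] at *
        simp [SStep.y] at *; omega
  · simp only [sysum_eq, wsum_cons, wsum_append] at *
    simp [SStep.y]; omega

lemma spl_Sch {i j : ℕ} {m r : List SStep} (hm : Sch i m) (hr : Sch j r) :
    spl SStep.y 0 (m ++ SStep.D :: r) = (m, r) := by
  apply spl_append
  · intro p hp
    have := hm.2.1 p hp
    simp only [sysum_eq] at this
    omega
  · have := hm.2.2
    simp only [sysum_eq] at this
    simp [SStep.y]; omega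

lemma y_neg (a : SStep) (h : SStep.y a < 0) : a = SStep.D ∧ SStep.y a = -1 := by
  cases a <;> simp_all [SStep.y]

lemma natcard_sigma {k : ℕ} (β : Fin k → Type*) [∀ i, Finite (β i)] :
    Nat.card ((i : Fin k) × β i) = ∑ i : Fin k, Nat.card (β i) := by
  haveI : ∀ i, Fintype (β i) := fun i => Fintype.ofFinite _
  simp [Nat.card_eq_fintype_card, Fintype.card_sigma]

def gR (n : ℕ) :
    ({l : List SStep // Sch n l} ⊕
      (i : Fin (n+1)) × ({l : List SStep // Sch i.1 l} × {l : List SStep // Sch (n - i.1) l})) →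
    {l : List SStep // Sch (n+1) l}
  | Sum.inl ⟨t, h⟩ => ⟨.H :: t, Sch_cons_H h⟩
  | Sum.inr ⟨i, ⟨m, hm⟩, ⟨r, hr⟩⟩ => ⟨.U :: m ++ .D :: r, by
      have h2 := Sch_U_D hm hr
      have h3 := i.2
      have hi : i.1 + (n - i.1) + 1 = n + 1 := by omega
      rwa [hi] at h2⟩

lemma gR_bij (n : ℕ) : Function.Bijective (gR n) := by
  constructor
  · rintro (⟨t, ht⟩ | ⟨i, ⟨m, hm⟩, ⟨r, hr⟩⟩) (⟨t', ht'⟩ | ⟨i', ⟨m', hm'⟩, ⟨r', hr'⟩⟩) hxy <;>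
      simp only [gR, Subtype.mk.injEq] at hxy
    · rw [List.cons.injEq] at hxy
      simp [hxy.2]
    · simp [List.cons_append] at hxy
    · simp [List.cons_append] at hxy
    · rw [List.cons_append, List.cons_append, List.cons.injEq] at hxy
      have h2 : m ++ SStep.D :: r = m' ++ SStep.D :: r' := hxy.2
      have e1 := spl_Sch hm hr
      rw [h2, spl_Sch hm' hr'] at e1
      rw [Prod.mk.injEq] at e1
      obtain ⟨rfl, rfl⟩ := e1
      have : i = i' := by
        have := hm.1; have := hm'.1
        exact Fin.ext (by omega)
      subst this
      rfl
  · rintro ⟨l, hl⟩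
    obtain ⟨hx, hpre, hs⟩ := hl
    match l, hx with
    | [], hx => simp at hx
    | SStep.D :: t, hx =>
      exact absurd (hpre [SStep.D] ⟨t, rfl⟩) (by simp [sysum_eq, SStep.y])
    | SStep.H :: t, hx =>
      refine ⟨Sum.inl ⟨t, ⟨by simp [SStep.x] at hx ⊢; omega, ?_, ?_⟩⟩, rfl⟩
      · intro p hp
        have := hpre (SStep.H :: p) (by simpa [List.cons_prefix_cons] using hp)
        simpa [sysum_eq, SStep.y] using this
      · have := hs; simp only [sysum_eq, wsum_cons] at this ⊢
        simp [SStep.y] at this; omega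
    | SStep.U :: t, hx =>
      have hneg : 0 + wsum SStep.y t < 0 := by
        have := hs; simp only [sysum_eq, wsum_cons] at this
        simp [SStep.y] at this; omega
      obtain ⟨e1, e2, e3⟩ := spl_spec SStep.y SStep.D y_neg t 0 le_rfl hneg
      set m := (spl SStep.y 0 t).1 with hm
      set r := (spl SStep.y 0 t).2 with hr
      have hmpre : ∀ p, p <+: m → 0 ≤ sysum p := by
        intro p hp; have := e2 p hp; simp only [sysum_eq]; omega
      have hms : sysum m = 0 := by simp only [sysum_eq]; omega
      have hrs : sysum r = 0 := by
        have := hs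
        rw [e1] at this
        simp only [sysum_eq, wsum_cons, wsum_append] at this hms ⊢
        simp [SStep.y] at this; omega
      have hrpre : ∀ p, p <+: r → 0 ≤ sysum p := by
        intro p hp
        have := hpre (SStep.U :: m ++ SStep.D :: p) (by
          rw [e1]
          obtain ⟨u, hu⟩ := hp
          exact ⟨u, by simp [← hu]⟩)
        simp only [sysum_eq, wsum_cons, wsum_append] at this hms ⊢
        simp [SStep.y] at this; omega
      have hxm : 2 ∣ sxlen m := by
        have := sxlen_parity m
        simp only [hms] at this
        omega
      obtain ⟨i, hi⟩ := hxm
      have hxt : sxlen t = 2 * n + 1 := by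
        simp only [sxlen_cons] at hx; simp [SStep.x] at hx; omega
      have hxr : sxlen r = 2 * (n - i) ∧ i ≤ n := by
        rw [e1] at hxt
        simp only [sxlen_append, sxlen_cons] at hxt
        simp [SStep.x] at hxt
        omega
      have hin : i < n + 1 := by omega
      refine ⟨Sum.inr ⟨⟨i, hin⟩, ⟨m, ⟨hi, hmpre, hms⟩⟩, ⟨r, ⟨hxr.1, hrpre, hrs⟩⟩⟩, ?_⟩
      simp only [gR, Subtype.mk.injEq]
      apply Subtype.ext
      dsimp only
      rw [e1, List.cons_append]

lemma R_succ (n : ℕ) :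
    R (n + 1) = R n + ∑ i ∈ Finset.range (n + 1), R i * R (n - i) := by
  haveI : ∀ m, Finite {l : List SStep // Sch m l} := sch_finite
  have h := Nat.card_eq_of_bijective (gR n) (gR_bij n)
  rw [Nat.card_sum] at h
  rw [natcard_sigma] at h
  simp only [Nat.card_prod] at h
  rw [Fin.sum_univ_eq_sum_range (fun i => Nat.card {l : List SStep // Sch i l} *
    Nat.card {l : List SStep // Sch (n - i) l})] at h
  exact h.symm


lemma LS_toSch {n : ℕ} {l : List SStep} (h : IsLittleSchroederPath n l) : Sch n l :=
  ⟨h.1, h.2.1, h.2.2.1⟩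

lemma ls_finite (n : ℕ) : Finite {l : List SStep // IsLittleSchroederPath n l} := by
  have h : {l : List SStep | IsLittleSchroederPath n l} ⊆ {l : List SStep | l.length ≤ 2 * n} := by
    intro l hl
    have := length_le_sxlen l
    have := hl.1
    simp only [Set.mem_setOf_eq]
    omega
  exact ((List.finite_length_le SStep (2*n)).subset h).to_subtype

lemma LS_zero : littleSchroeder 0 = 1 := by
  have key : ∀ l : List SStep, IsLittleSchroederPath 0 l → l = [] := by
    intro l hl
    have h1 := length_le_sxlen l
    have h2 := hl.1
    exact List.eq_nil_of_length_eq_zero (by omega)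
  have : Unique {l : List SStep // IsLittleSchroederPath 0 l} :=
    ⟨⟨⟨[], by
        refine ⟨rfl, ?_, rfl, ?_⟩
        · intro p hp; simp [List.prefix_nil.1 hp, sysum]
        · rintro ⟨p, q, hpq, -⟩; simp at hpq⟩⟩,
     fun l => Subtype.ext (by rw [key _ l.2]; rfl)⟩
  simp [littleSchroeder, Nat.card_unique]

lemma LS_cons_H {n : ℕ} {t : List SStep} (h : IsLittleSchroederPath n t) :
    IsLittleSchroederPath (n + 1) (SStep.H :: t) := by
  have hs := Sch_cons_H (LS_toSch h)
  refine ⟨hs.1, hs.2.1, hs.2.2, ?_⟩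
  rintro ⟨p, q, hpq, hp0⟩
  cases p with
  | nil => simp at hpq
  | cons a p' =>
    rw [List.cons_append, List.cons.injEq] at hpq
    obtain ⟨rfl, hpq⟩ := hpq
    refine h.2.2.2 ⟨p', q, hpq, ?_⟩
    simp only [sysum_eq, wsum_cons] at hp0 ⊢
    simp [SStep.y] at hp0; omega

lemma LS_U_D {i j : ℕ} {m r : List SStep} (hm : Sch i m) (hmne : m ≠ [])
    (hr : IsLittleSchroederPath j r) :
    IsLittleSchroederPath (i + j + 1) (SStep.U :: m ++ SStep.D :: r) := by
  have hs := Sch_U_D hm (LS_toSch hr)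
  refine ⟨hs.1, hs.2.1, hs.2.2, ?_⟩
  rintro ⟨p, q, hpq, hp0⟩
  cases p with
  | nil =>
    simp only [List.nil_append] at hpq
    rw [List.cons_append, List.cons.injEq] at hpq
    cases m with
    | nil => exact hmne rfl
    | cons b m' =>
      have hb := hm.2.1 [b] ⟨m', rfl⟩
      rw [List.cons_append, List.cons.injEq] at hpq
      obtain ⟨-, rfl, -⟩ := hpq
      simp [sysum_eq, SStep.y] at hb
  | cons a p' =>
    rw [List.cons_append, List.cons_append, List.cons.injEq] at hpq
    obtain ⟨rfl, hpq2⟩ := hpq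
    have hp' : sysum p' = -1 := by
      simp only [sysum_eq, wsum_cons] at hp0 ⊢
      simp [SStep.y] at hp0; omega
    have hpfx : p' <+: m ++ SStep.D :: r := ⟨SStep.U :: SStep.D :: q, hpq2.symm⟩
    rcases prefix_append_cases hpfx with hc | ⟨p'', rfl, -⟩
    · have := hm.2.1 p' hc
      omega
    · have hp'' : sysum p'' = 0 := by
        have := hm.2.2
        simp only [sysum_eq, wsum_cons, wsum_append] at hp' this ⊢
        simp [SStep.y] at hp'; omega
      have hrq : r = p'' ++ SStep.U :: SStep.D :: q := by
        rw [List.append_assoc] at hpq2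
        have := (List.append_cancel_left hpq2)
        rw [List.cons_append, List.cons.injEq] at this
        exact this.2
      exact hr.2.2.2 ⟨p'', q, hrq, hp''⟩

def gS (n : ℕ) :
    ({l : List SStep // IsLittleSchroederPath n l} ⊕
      (i : Fin n) × ({l : List SStep // Sch (i.1 + 1) l} ×
        {l : List SStep // IsLittleSchroederPath (n - 1 - i.1) l})) →
    {l : List SStep // IsLittleSchroederPath (n + 1) l}
  | Sum.inl ⟨t, h⟩ => ⟨.H :: t, LS_cons_H h⟩
  | Sum.inr ⟨i, ⟨m, hm⟩, ⟨r, hr⟩⟩ => ⟨.U :: m ++ .D :: r, by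
      have hne : m ≠ [] := sxlen_pos_ne_nil (by rw [hm.1]; omega)
      have h2 := LS_U_D hm hne hr
      have h3 := i.2
      have hi : i.1 + 1 + (n - 1 - i.1) + 1 = n + 1 := by omega
      rwa [hi] at h2⟩

lemma gS_bij (n : ℕ) : Function.Bijective (gS n) := by
  constructor
  · rintro (⟨t, ht⟩ | ⟨i, ⟨m, hm⟩, ⟨r, hr⟩⟩) (⟨t', ht'⟩ | ⟨i', ⟨m', hm'⟩, ⟨r', hr'⟩⟩) hxy <;>
      simp only [gS, Subtype.mk.injEq] at hxy
    · rw [List.cons.injEq] at hxy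
      simp [hxy.2]
    · simp [List.cons_append] at hxy
    · simp [List.cons_append] at hxy
    · rw [List.cons_append, List.cons_append, List.cons.injEq] at hxy
      have h2 : m ++ SStep.D :: r = m' ++ SStep.D :: r' := hxy.2
      have e1 := spl_Sch hm (LS_toSch hr)
      rw [h2, spl_Sch hm' (LS_toSch hr')] at e1
      rw [Prod.mk.injEq] at e1
      obtain ⟨rfl, rfl⟩ := e1
      have : i = i' := by
        have := hm.1; have := hm'.1
        exact Fin.ext (by omega)
      subst this
      rfl
  · rintro ⟨l, hl⟩
    obtain ⟨hx, hpre, hs, hnp⟩ := hl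
    match l, hx, hnp with
    | [], hx, hnp => simp at hx
    | SStep.D :: t, hx, hnp =>
      exact absurd (hpre [SStep.D] ⟨t, rfl⟩) (by simp [sysum_eq, SStep.y])
    | SStep.H :: t, hx, hnp =>
      refine ⟨Sum.inl ⟨t, ⟨by simp [SStep.x] at hx ⊢; omega, ?_, ?_, ?_⟩⟩, rfl⟩
      · intro p hp
        have := hpre (SStep.H :: p) (by simpa [List.cons_prefix_cons] using hp)
        simpa [sysum_eq, SStep.y] using this
      · have := hs; simp only [sysum_eq, wsum_cons] at this ⊢
        simp [SStep.y] at this; omega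
      · rintro ⟨p, q, rfl, hp0⟩
        exact hnp ⟨SStep.H :: p, q, rfl, by
          simp only [sysum_eq, wsum_cons] at hp0 ⊢; simp [SStep.y]; omega⟩
    | SStep.U :: t, hx, hnp =>
      have hneg : 0 + wsum SStep.y t < 0 := by
        have := hs; simp only [sysum_eq, wsum_cons] at this
        simp [SStep.y] at this; omega
      obtain ⟨e1, e2, e3⟩ := spl_spec SStep.y SStep.D y_neg t 0 le_rfl hneg
      set m := (spl SStep.y 0 t).1 with hmdef
      set r := (spl SStep.y 0 t).2 with hrdef
      have hmpre : ∀ p, p <+: m → 0 ≤ sysum p := by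
        intro p hp; have := e2 p hp; simp only [sysum_eq]; omega
      have hms : sysum m = 0 := by simp only [sysum_eq]; omega
      have hrs : sysum r = 0 := by
        have := hs
        rw [e1] at this
        simp only [sysum_eq, wsum_cons, wsum_append] at this hms ⊢
        simp [SStep.y] at this; omega
      have hrpre : ∀ p, p <+: r → 0 ≤ sysum p := by
        intro p hp
        have := hpre (SStep.U :: m ++ SStep.D :: p) (by
          rw [e1]
          obtain ⟨u, hu⟩ := hp
          exact ⟨u, by simp [← hu]⟩)
        simp only [sysum_eq, wsum_cons, wsum_append] at this hms ⊢
        simp [SStep.y] at this; omega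
      have hrnp : ¬ ∃ p q, r = p ++ SStep.U :: SStep.D :: q ∧ sysum p = 0 := by
        rintro ⟨p, q, hpq, hp0⟩
        refine hnp ⟨SStep.U :: m ++ SStep.D :: p, q, ?_, ?_⟩
        · rw [e1, hpq]; simp
        · simp only [sysum_eq, wsum_cons, wsum_append] at hms hp0 ⊢
          simp [SStep.y]; omega
      have hmne : m ≠ [] := by
        intro hmnil
        refine hnp ⟨[], r, ?_, by simp [sysum]⟩
        rw [e1, hmnil]; simp
      have hxm : 2 ∣ sxlen m := by
        have := sxlen_parity m
        simp only [hms] at this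
        omega
      obtain ⟨j, hj⟩ := hxm
      have hjpos : 1 ≤ j := by
        rcases Nat.eq_zero_or_pos j with rfl | h
        · exfalso
          exact hmne (List.eq_nil_of_length_eq_zero (by have := length_le_sxlen m; omega))
        · exact h
      have hxt : sxlen t = 2 * n + 1 := by
        simp only [sxlen_cons] at hx; simp [SStep.x] at hx; omega
      have hxr : sxlen r = 2 * (n - j) ∧ j ≤ n := by
        rw [e1] at hxt
        simp only [sxlen_append, sxlen_cons] at hxt
        simp [SStep.x] at hxt
        omega
      have hin : j - 1 < n := by omega
      have hmsch : Sch (j - 1 + 1) m := ⟨by omega, hmpre, hms⟩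
      have hrls : IsLittleSchroederPath (n - 1 - (j - 1)) r :=
        ⟨by omega, hrpre, hrs, hrnp⟩
      refine ⟨Sum.inr ⟨⟨j - 1, hin⟩, ⟨m, hmsch⟩, ⟨r, hrls⟩⟩, ?_⟩
      simp only [gS, Subtype.mk.injEq]
      apply Subtype.ext
      dsimp only
      rw [e1, List.cons_append]

lemma LS_succ (n : ℕ) :
    littleSchroeder (n + 1) =
      littleSchroeder n + ∑ i ∈ Finset.range n, R (i + 1) * littleSchroeder (n - 1 - i) := by
  haveI : ∀ m, Finite {l : List SStep // Sch m l} := sch_finite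
  haveI : ∀ m, Finite {l : List SStep // IsLittleSchroederPath m l} := ls_finite
  have h := Nat.card_eq_of_bijective (gS n) (gS_bij n)
  rw [Nat.card_sum, natcard_sigma] at h
  simp only [Nat.card_prod] at h
  rw [Fin.sum_univ_eq_sum_range (fun i => Nat.card {l : List SStep // Sch (i + 1) l} *
    Nat.card {l : List SStep // IsLittleSchroederPath (n - 1 - i) l})] at h
  exact h.symm


inductive CS | u0 | u1 | dn
deriving DecidableEq

instance : Fintype CS := ⟨{.u0, .u1, .dn}, fun x => by cases x <;> simp⟩

def cy : CS → ℤ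
  | .dn => -1
  | _ => 1

def db : CS → Bool
  | .dn => false
  | _ => true

def ok4 (l : List CS) : Prop :=
  ∀ r, l[r]? = some .u1 → l[r+1]? = some .u0 ∨ l[r+1]? = some .u1

def Good (n : ℕ) (l : List CS) : Prop :=
  l.length = 2 * n ∧ (∀ p, p <+: l → 0 ≤ wsum cy p) ∧ wsum cy l = 0 ∧ ok4 l

def dec (l : List CS) : List Bool := l.map db

def col (l : List CS) (i : ℕ) : ℕ := if l[i]? = some .u1 then 1 else 0

def enc : List Bool → (ℕ → ℕ) → List CS
  | [], _ => []
  | b :: t, c =>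
    (if b then (if c 0 = 0 then CS.u0 else CS.u1) else CS.dn) :: enc t (fun i => c (i + 1))

lemma enc_get (lb : List Bool) : ∀ (c : ℕ → ℕ) (i : ℕ),
    (enc lb c)[i]? = lb[i]?.map (fun b => if b then (if c i = 0 then CS.u0 else CS.u1) else CS.dn) := by
  induction lb with
  | nil => intro c i; simp [enc]
  | cons b t ih =>
    intro c i
    cases i with
    | zero => simp [enc]
    | succ j => simpa [enc] using ih (fun i => c (i + 1)) j

lemma enc_length (lb : List Bool) : ∀ c, (enc lb c).length = lb.length := by
  induction lb with
  | nil => intro c; rfl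
  | cons b t ih => intro c; simp [enc, ih]

lemma wsum_cy_take (lb : List Bool) : ∀ (c : ℕ → ℕ) (k : ℕ),
    wsum cy ((enc lb c).take k) = dsum (lb.take k) := by
  induction lb with
  | nil => intro c k; simp [enc, dsum]
  | cons b t ih =>
    intro c k
    cases k with
    | zero => simp [dsum]
    | succ j =>
      have h := ih (fun i => c (i + 1)) j
      simp only [enc, List.take_succ_cons, wsum_cons]
      rw [h]
      simp only [dsum, List.map_cons, List.sum_cons]
      cases b
      · simp [cy, dval]
      · by_cases h0 : c 0 = 0 <;> simp [h0, cy, dval]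

lemma dsum_eq_wsum (l : List Bool) : dsum l = wsum dval l := rfl

lemma dsum_dec (p : List CS) : dsum (dec p) = wsum cy p := by
  induction p with
  | nil => simp [dec, dsum]
  | cons a t ih =>
    have h : dval (db a) = cy a := by cases a <;> simp [db, dval, cy]
    simp only [dec, dsum, List.map_cons, List.sum_cons, wsum_cons] at *
    omega

lemma dec_length (p : List CS) : (dec p).length = p.length := by simp [dec]

lemma dec_get (l : List CS) (i : ℕ) : (dec l)[i]? = l[i]?.map db := by
  simp [dec]

lemma good_to_coloured {n : ℕ} {l : List CS} (h : Good n l) :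
    IsDyck (dec l) ∧ (dec l).length = 2 * n ∧
      ∀ r, (FreeUp (dec l) r → col l r < 2) ∧ (¬ FreeUp (dec l) r → col l r = 0) := by
  obtain ⟨hlen, hpre, hsum, h4⟩ := h
  refine ⟨⟨?_, by rw [dsum_dec]; exact hsum⟩, by rw [dec_length]; exact hlen, ?_⟩
  · intro p hp
    have : p = (dec l).take p.length := List.prefix_iff_eq_take.1 hp
    rw [this, dec, ← List.map_take, ← dec]
    rw [dsum_dec]
    exact hpre _ (List.take_prefix _ _)
  · intro r
    constructor
    · intro _
      simp only [col]
      split <;> omega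
    · intro hnf
      simp only [col, ite_eq_right_iff]
      intro hr
      exfalso
      apply hnf
      have h2 := h4 r hr
      constructor
      · rw [dec_get, hr]; simp [db]
      · rw [dec_get]
        rcases h2 with h2 | h2 <;> rw [h2] <;> simp [db]

/-- the bridge: colouredDyck 2 n is the number of Good words of length 2n -/
lemma colouredDyck_eq_good (n : ℕ) : colouredDyck 2 n = Nat.card {l : List CS // Good n l} := by
  refine (Nat.card_eq_of_bijective (fun x : {l : List CS // Good n l} =>
    ⟨(dec x.1, col x.1), good_to_coloured x.2⟩) ⟨?_, ?_⟩).symm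
  · rintro ⟨l, hl⟩ ⟨l', hl'⟩ hxy
    simp only [Subtype.mk.injEq, Prod.mk.injEq] at hxy
    obtain ⟨h1, h2⟩ := hxy
    refine Subtype.ext (List.ext_getElem? fun i => ?_)
    have e1 : (dec l)[i]? = (dec l')[i]? := by rw [h1]
    rw [dec_get, dec_get] at e1
    have e2 : col l i = col l' i := by rw [h2]
    simp only [col] at e2
    cases hc : l[i]? with
    | none =>
      rw [hc] at e1
      cases hc' : l'[i]? with
      | none => rfl
      | some a' => rw [hc'] at e1; simp at e1
    | some a =>
      rw [hc] at e1
      cases hc' : l'[i]? with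
      | none => rw [hc'] at e1; simp at e1
      | some a' =>
        rw [hc'] at e1
        rw [hc, hc'] at e2
        simp only [Option.map_some, Option.some.injEq] at e1
        cases a <;> cases a' <;> simp_all [db]
  · rintro ⟨⟨lb, c⟩, hdy, hlen, hcol⟩
    have hc0 : ∀ i, ¬ FreeUp lb i → c i = 0 := fun i h => (hcol i).2 h
    have hc2 : ∀ i, FreeUp lb i → c i < 2 := fun i h => (hcol i).1 h
    refine ⟨⟨enc lb c, ?_, ?_, ?_, ?_⟩, ?_⟩
    · rw [enc_length]; exact hlen
    · intro p hp
      have : p = (enc lb c).take p.length := List.prefix_iff_eq_take.1 hp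
      rw [this, wsum_cy_take]
      exact hdy.1 _ (List.take_prefix _ _)
    · have := wsum_cy_take lb c lb.length
      rw [List.take_of_length_le (by rw [enc_length]) , List.take_of_length_le le_rfl] at this
      rw [this]
      exact hdy.2
    · intro r hr
      rw [enc_get] at hr ⊢
      cases hb : lb[r]? with
      | none => rw [hb] at hr; simp at hr
      | some b =>
        rw [hb] at hr
        simp only [Option.map_some, Option.some.injEq] at hr
        have hbt : b = true ∧ c r ≠ 0 := by
          cases b
          · simp [if_neg] at hr
          · refine ⟨rfl, ?_⟩
            intro h0
            rw [if_pos rfl, if_pos h0] at hr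
            exact CS.noConfusion hr
        have hfu : FreeUp lb r := by
          by_contra hnf
          exact hbt.2 (hc0 r hnf)
        have hnext : lb[r+1]? = some true := hfu.2
        rw [hnext]
        simp only [Option.map_some, if_pos]
        by_cases hcr : c (r+1) = 0
        · left; rw [if_pos hcr]
        · right; rw [if_neg hcr]
    · refine Subtype.ext (Prod.ext ?_ ?_)
      · simp only
        refine List.ext_getElem? fun i => ?_
        rw [dec_get, enc_get]
        cases hb : lb[i]? with
        | none => simp
        | some b =>
          cases b
          · simp [db]
          · simp only [Option.map_some, if_true]
            by_cases h0 : c i = 0 <;> simp [h0, db]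
      · simp only
        funext i
        simp only [col, enc_get]
        cases hb : lb[i]? with
        | none =>
          have hnf : ¬ FreeUp lb i := fun hf => by
            have h1 := hf.1; rw [hb] at h1; simp at h1
          simp only [Option.map_none]
          rw [if_neg (by simp), hc0 i hnf]
        | some b =>
          cases b with
          | false =>
            have hnf : ¬ FreeUp lb i := fun hf => by
              have h1 := hf.1; rw [hb] at h1; simp at h1
            rw [hc0 i hnf]
            simp [db]
          | true =>
            simp only [Option.map_some, if_true]
            by_cases h0 : c i = 0
            · simp [h0]
            · simp only [h0, reduceIte]
              have hf : FreeUp lb i := by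
                by_contra hnf; exact h0 (hc0 i hnf)
              have := hc2 i hf
              omega

lemma ok4_cons (a : CS) (l : List CS) :
    ok4 (a :: l) ↔ (a = .u1 → (l[0]? = some .u0 ∨ l[0]? = some .u1)) ∧ ok4 l := by
  constructor
  · intro h
    refine ⟨fun ha => ?_, fun r hr => ?_⟩
    · have := h 0 (by simp [ha])
      simpa using this
    · have := h (r + 1) (by simpa using hr)
      simpa using this
  · rintro ⟨h1, h2⟩ r hr
    cases r with
    | zero => simp at hr ⊢; subst hr; simpa using h1 rfl
    | succ k => simp at hr ⊢; simpa using h2 k (by simpa using hr)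

lemma ok4_append {m r : List CS} (hm : ok4 m) (hr : ok4 r) : ok4 (m ++ .dn :: r) := by
  induction m with
  | nil => exact (ok4_cons _ _).2 ⟨by simp, hr⟩
  | cons a m ih =>
    rw [ok4_cons] at hm
    rw [List.cons_append, ok4_cons]
    refine ⟨fun ha => ?_, ih hm.2⟩
    have h0 := hm.1 ha
    cases m with
    | nil => simp at h0
    | cons b m' => simpa using h0

lemma ok4_unappend {m r : List CS} (h : ok4 (m ++ .dn :: r)) : ok4 m ∧ ok4 r := by
  induction m with
  | nil => exact ⟨fun r hr => by simp at hr, ((ok4_cons _ _).1 h).2⟩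
  | cons a m ih =>
    rw [List.cons_append, ok4_cons] at h
    obtain ⟨hm, hr'⟩ := ih h.2
    refine ⟨(ok4_cons _ _).2 ⟨fun ha => ?_, hm⟩, hr'⟩
    have h0 := h.1 ha
    cases m with
    | nil => simp at h0
    | cons b m' => simpa using h0

lemma cy_neg (a : CS) (h : cy a < 0) : a = CS.dn ∧ cy a = -1 := by
  cases a <;> simp_all [cy]

lemma cy_parity (l : List CS) : (2 : ℤ) ∣ (l.length : ℤ) - wsum cy l := by
  induction l with
  | nil => simp
  | cons a t ih =>
    have : (2:ℤ) ∣ 1 - cy a := by cases a <;> simp [cy]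
    simp only [List.length_cons, wsum_cons, Nat.cast_add, Nat.cast_one] at *
    omega

lemma good_finite (n : ℕ) : Finite {l : List CS // Good n l} := by
  have h : {l : List CS | Good n l} ⊆ {l : List CS | l.length ≤ 2 * n} := by
    intro l hl
    have := hl.1
    simp only [Set.mem_setOf_eq]
    omega
  exact ((List.finite_length_le CS (2*n)).subset h).to_subtype

noncomputable def GC (n : ℕ) : ℕ := Nat.card {l : List CS // Good n l}

lemma GC_zero : GC 0 = 1 := by
  have key : ∀ l : List CS, Good 0 l → l = [] := by
    intro l hl
    exact List.eq_nil_of_length_eq_zero (by have := hl.1; omega)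
  have : Unique {l : List CS // Good 0 l} :=
    ⟨⟨⟨[], by
        refine ⟨rfl, ?_, rfl, fun r hr => by simp at hr⟩
        intro p hp; simp [List.prefix_nil.1 hp]⟩⟩,
     fun l => Subtype.ext (by rw [key _ l.2]; rfl)⟩
  simp [GC, Nat.card_unique]

lemma Good_cons_ud {n : ℕ} {t : List CS} (h : Good n t) :
    Good (n + 1) (.u0 :: .dn :: t) := by
  obtain ⟨hlen, hpre, hsum, h4⟩ := h
  refine ⟨by simp [hlen]; ring, ?_, ?_, ?_⟩
  · intro p hp
    rcases prefix_cons_cases hp with rfl | ⟨q, rfl, hq⟩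
    · simp
    · rcases prefix_cons_cases hq with rfl | ⟨q', rfl, hq'⟩
      · simp [cy]
      · have := hpre q' hq'
        simp only [wsum_cons]
        simp [cy]; omega
  · simp only [wsum_cons]
    simp [cy]; omega
  · exact (ok4_cons _ _).2 ⟨by simp, (ok4_cons _ _).2 ⟨by simp, h4⟩⟩

lemma Good_U_D (u : CS) (hu : u ≠ .dn) {i j : ℕ} {m r : List CS}
    (hm : Good (i + 1) m) (hr : Good j r) :
    Good (i + 1 + j + 1) (u :: m ++ .dn :: r) := by
  have hmne : m ≠ [] := by
    intro h; rw [h] at hm; have := hm.1; simp at this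
  have hcyu : cy u = 1 := by cases u <;> simp_all [cy]
  refine ⟨?_, ?_, ?_, ?_⟩
  · have := hm.1; have := hr.1
    simp only [List.cons_append, List.length_cons, List.length_append]
    omega
  · intro p hp
    rw [List.cons_append] at hp
    rcases prefix_cons_cases hp with rfl | ⟨q, rfl, hq⟩
    · simp
    · rcases prefix_append_cases hq with hq' | ⟨q', rfl, hq'⟩
      · have := hm.2.1 q hq'
        simp only [wsum_cons]
        omega
      · have := hr.2.1 q' hq'
        have := hm.2.2.1
        simp only [wsum_cons, wsum_append]
        simp [cy]; omega
  · have := hm.2.2.1; have := hr.2.2.1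
    simp only [List.cons_append, wsum_cons, wsum_append]
    simp [cy]; omega
  · rw [List.cons_append]
    refine (ok4_cons _ _).2 ⟨fun _ => ?_, ok4_append hm.2.2.2 hr.2.2.2⟩
    cases m with
    | nil => exact absurd rfl hmne
    | cons b m' =>
      have hb := hm.2.1 [b] ⟨m', rfl⟩
      simp only [wsum_cons, wsum_nil] at hb
      cases b
      · simp
      · simp
      · simp [cy] at hb

lemma spl_Good {i : ℕ} {m : List CS} (hm : Good i m) (r : List CS) :
    spl cy 0 (m ++ CS.dn :: r) = (m, r) := by
  apply spl_append
  · intro p hp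
    have := hm.2.1 p hp
    omega
  · have := hm.2.2.1
    simp [cy]; omega

def gGC (n : ℕ) :
    ({l : List CS // Good n l} ⊕
      (i : Fin n) × (Bool × ({l : List CS // Good (i.1 + 1) l} ×
        {l : List CS // Good (n - 1 - i.1) l}))) →
    {l : List CS // Good (n + 1) l}
  | Sum.inl ⟨t, h⟩ => ⟨.u0 :: .dn :: t, Good_cons_ud h⟩
  | Sum.inr ⟨i, b, ⟨m, hm⟩, ⟨r, hr⟩⟩ => ⟨(if b then CS.u1 else CS.u0) :: m ++ .dn :: r, by
      have hu : (if b then CS.u1 else CS.u0) ≠ .dn := by cases b <;> simp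
      have h2 := Good_U_D _ hu hm hr
      have h3 := i.2
      have hi : i.1 + 1 + (n - 1 - i.1) + 1 = n + 1 := by omega
      rwa [hi] at h2⟩

lemma head_not_dn {i : ℕ} {m : List CS} (hm : Good i m) {b : CS} {m' : List CS}
    (h : m = b :: m') : b ≠ CS.dn := by
  intro hb
  have := hm.2.1 [b] (by rw [h]; exact ⟨m', rfl⟩)
  rw [hb] at this
  simp [cy] at this

lemma gGC_bij (n : ℕ) : Function.Bijective (gGC n) := by
  constructor
  · rintro (⟨t, ht⟩ | ⟨i, b, ⟨m, hm⟩, ⟨r, hr⟩⟩) (⟨t', ht'⟩ | ⟨i', b', ⟨m', hm'⟩, ⟨r', hr'⟩⟩) hxy <;>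
      simp only [gGC, Subtype.mk.injEq] at hxy
    · rw [List.cons.injEq, List.cons.injEq] at hxy
      simp [hxy.2.2]
    · exfalso
      rw [List.cons_append, List.cons.injEq] at hxy
      cases b'
      · simp only [if_neg Bool.false_ne_true] at hxy
        obtain ⟨-, hxy2⟩ := hxy
        cases m' with
        | nil => have := hm'.1; simp at this
        | cons c mm =>
          rw [List.cons_append, List.cons.injEq] at hxy2
          exact head_not_dn hm' rfl hxy2.1.symm
      · simp only [if_pos rfl] at hxy
        exact CS.noConfusion hxy.1
    · exfalso
      rw [List.cons_append, List.cons.injEq] at hxy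
      cases b
      · simp only [if_neg Bool.false_ne_true] at hxy
        obtain ⟨-, hxy2⟩ := hxy
        cases m with
        | nil => have := hm.1; simp at this
        | cons c mm =>
          rw [List.cons_append, List.cons.injEq] at hxy2
          exact head_not_dn hm rfl hxy2.1
      · simp only [if_pos rfl] at hxy
        exact CS.noConfusion hxy.1
    · rw [List.cons_append, List.cons_append, List.cons.injEq] at hxy
      have hbb : b = b' := by
        rcases hxy with ⟨h1, -⟩
        cases b <;> cases b' <;> simp_all
      subst hbb
      have h2 : m ++ CS.dn :: r = m' ++ CS.dn :: r' := hxy.2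
      have e1 := spl_Good hm r
      rw [h2, spl_Good hm' r'] at e1
      rw [Prod.mk.injEq] at e1
      obtain ⟨rfl, rfl⟩ := e1
      have : i = i' := by
        have := hm.1; have := hm'.1
        exact Fin.ext (by omega)
      subst this
      rfl
  · rintro ⟨l, hl⟩
    obtain ⟨hlen, hpre, hsum, h4⟩ := hl
    match l, hlen, h4 with
    | [], hlen, h4 => simp at hlen
    | CS.dn :: t, hlen, h4 =>
      exact absurd (hpre [CS.dn] ⟨t, rfl⟩) (by simp [cy])
    | a :: t, hlen, h4 =>
      have hane : a ≠ CS.dn := by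
        rintro rfl
        exact absurd (hpre [CS.dn] ⟨t, rfl⟩) (by simp [cy])
      have hcya : cy a = 1 := by cases a <;> simp_all [cy]
      have hneg : 0 + wsum cy t < 0 := by
        simp only [wsum_cons] at hsum
        omega
      obtain ⟨e1, e2, e3⟩ := spl_spec cy CS.dn cy_neg t 0 le_rfl hneg
      set m := (spl cy 0 t).1 with hmdef
      set r := (spl cy 0 t).2 with hrdef
      have hmpre : ∀ p, p <+: m → 0 ≤ wsum cy p := fun p hp => by
        have := e2 p hp; omega
      have hms : wsum cy m = 0 := by omega
      have hrs : wsum cy r = 0 := by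
        rw [e1] at hsum
        simp only [wsum_cons, wsum_append] at hsum
        simp [cy] at hsum; omega
      have hrpre : ∀ p, p <+: r → 0 ≤ wsum cy p := by
        intro p hp
        have := hpre (a :: m ++ CS.dn :: p) (by
          rw [e1]
          obtain ⟨u, hu⟩ := hp
          exact ⟨u, by simp [← hu]⟩)
        simp only [List.cons_append, wsum_cons, wsum_append] at this
        simp [cy] at this; omega
      have h4t : ok4 t := ((ok4_cons _ _).1 h4).2
      have h4mr : ok4 m ∧ ok4 r := ok4_unappend (e1 ▸ h4t)
      have hlm : 2 ∣ m.length := by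
        have := cy_parity m
        rw [hms] at this
        omega
      obtain ⟨j, hj⟩ := hlm
      have hlt : t.length = 2 * n + 1 := by
        simp only [List.length_cons] at hlen; omega
      have hlr : r.length = 2 * n - 2 * j ∧ j ≤ n := by
        rw [e1] at hlt
        simp only [List.length_append, List.length_cons] at hlt
        omega
      rcases Nat.eq_zero_or_pos j with hj0 | hjpos
      · -- m is empty
        have hmnil : m = [] := by
          subst hj0
          exact List.eq_nil_of_length_eq_zero (by omega)
        have hau0 : a = CS.u0 := by
          cases a with
          | u0 => rfl
          | dn => exact absurd rfl hane
          | u1 =>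
            exfalso
            have := ((ok4_cons _ _).1 h4).1 rfl
            rw [e1, hmnil] at this
            simp at this
        have hrg : Good n r := ⟨by omega, hrpre, hrs, h4mr.2⟩
        refine ⟨Sum.inl ⟨r, hrg⟩, ?_⟩
        simp only [gGC, Subtype.mk.injEq]
        apply Subtype.ext
        dsimp only
        rw [e1, hmnil, hau0]
        simp
      · have hin : j - 1 < n := by omega
        have hmg : Good (j - 1 + 1) m := ⟨by omega, hmpre, hms, h4mr.1⟩
        have hrg : Good (n - 1 - (j - 1)) r := ⟨by omega, hrpre, hrs, h4mr.2⟩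
        refine ⟨Sum.inr ⟨⟨j - 1, hin⟩, (a == CS.u1), ⟨m, hmg⟩, ⟨r, hrg⟩⟩, ?_⟩
        simp only [gGC, Subtype.mk.injEq]
        apply Subtype.ext
        dsimp only
        rw [e1, List.cons_append]
        congr 1
        cases a with
        | u0 => simp
        | u1 => simp
        | dn => exact absurd rfl hane

lemma GC_succ (n : ℕ) :
    GC (n + 1) = GC n + ∑ i ∈ Finset.range n, 2 * (GC (i + 1) * GC (n - 1 - i)) := by
  haveI : ∀ m, Finite {l : List CS // Good m l} := good_finite
  have h := Nat.card_eq_of_bijective (gGC n) (gGC_bij n)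
  rw [Nat.card_sum, natcard_sigma] at h
  simp only [Nat.card_prod] at h
  rw [Fin.sum_univ_eq_sum_range (fun i => Nat.card Bool *
    (Nat.card {l : List CS // Good (i + 1) l} * Nat.card {l : List CS // Good (n - 1 - i) l}))] at h
  simp only [Nat.card_eq_fintype_card, Fintype.card_bool] at h
  simp only [GC]
  exact h.symm

lemma key : ∀ n, GC n = littleSchroeder n ∧ R (n + 1) = 2 * littleSchroeder (n + 1) := by
  intro n
  induction n using Nat.strong_induction_on with
  | _ n ih =>
    match n with
    | 0 =>
      refine ⟨by rw [GC_zero, LS_zero], ?_⟩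
      rw [R_succ, LS_succ]
      simp [R_zero, LS_zero]
    | (k + 1) =>
      have ihk : ∀ m, m ≤ k → GC m = littleSchroeder m ∧
          R (m + 1) = 2 * littleSchroeder (m + 1) := fun m h => ih m (by omega)
      have hRk : R (k + 1) = 2 * littleSchroeder (k + 1) := (ihk k le_rfl).2
      constructor
      · rw [GC_succ, LS_succ, (ihk k le_rfl).1]
        congr 1
        apply Finset.sum_congr rfl
        intro i hi
        have hi' : i < k := Finset.mem_range.1 hi
        rw [(ihk (i + 1) (by omega)).1, (ihk (k - 1 - i) (by omega)).1, (ihk i (by omega)).2]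
        ring
      · rw [R_succ, LS_succ]
        rw [Finset.sum_range_succ, Finset.sum_range_succ']
        rw [Finset.sum_range_succ]
        have hidx : ∀ i : ℕ, k + 1 - 1 - i = k - i := fun i => by omega
        simp only [hidx, Nat.sub_self, Nat.add_sub_cancel_left, Nat.add_sub_cancel, Nat.sub_zero]
        have hA : ∑ i ∈ Finset.range k, R (i + 1) * R (k + 1 - (i + 1)) =
            2 * ∑ i ∈ Finset.range k, R (i + 1) * littleSchroeder (k - i) := by
          rw [Finset.mul_sum]
          apply Finset.sum_congr rfl
          intro i hi
          have hi' : i < k := Finset.mem_range.1 hi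
          have h1 : k + 1 - (i + 1) = (k - i - 1) + 1 := by omega
          rw [h1, (ihk (k - i - 1) (by omega)).2]
          have h2 : k - i - 1 + 1 = k - i := by omega
          rw [h2]
          ring
        rw [hA, R_zero, LS_zero, hRk]
        ring

/-- The number of 2-Dyck paths of length `2n` equals the `n`-th little Schröder number. -/
theorem stmt_17 (n : ℕ) : colouredDyck 2 n = littleSchroeder n := by
  rw [colouredDyck_eq_good]
  exact (key n).1
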